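/- Let F : U → SL(2, ℂ) be a holomorphic solution of F⁻¹ F' = ((g, -g²),(1, -g)) ŵ on a connected open set U, with g, ŵ holomorphic and ŵ not identically zero. If the hyperbolic Gauss map G = F₁₁'/F₂₁' is a constant c, then there exist constants C₁, C₂ ∈ ℂ with F₁₁ = c F₂₁ + C₁ and F₁₂ = c F₂₂ + C₂, and the secondary Gauss map g equals the constant -C₂/C₁ (so the surface is flat). -/
import Mathlib

/-- A function with zero derivative on a preconnected open set is constant. -/
lemma const_of_hasDerivAt_zero (U : Set ℂ) (hU : IsOpen U) (hUc : IsPreconnected U)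
    (f : ℂ → ℂ) (hf : ∀ z ∈ U, HasDerivAt f 0 z) {z₀ : ℂ} (hz₀ : z₀ ∈ U) :
    ∀ z ∈ U, f z = f z₀ := by
  have hfd : ∀ z ∈ U, HasFDerivAt f (0 : ℂ →L[ℂ] ℂ) z := fun z hz =>
    (hf z hz).hasFDerivAt.congr_fderiv (by ext; simp)
  have hdiff : DifferentiableOn ℂ f U := fun z hz =>
    (hfd z hz).differentiableAt.differentiableWithinAt
  have han : AnalyticOnNhd ℂ f U := hdiff.analyticOnNhd hU
  have hconst : AnalyticOnNhd ℂ (fun _ => f z₀) U := analyticOnNhd_const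
  have hev : f =ᶠ[nhds z₀] (fun _ => f z₀) := by
    obtain ⟨ε, hε, hball⟩ := Metric.isOpen_iff.1 hU z₀ hz₀
    refine Filter.eventuallyEq_iff_exists_mem.2 ⟨Metric.ball z₀ ε,
      Metric.ball_mem_nhds z₀ hε, fun y hy => ?_⟩
    exact (convex_ball z₀ ε).is_const_of_fderivWithin_eq_zero
      (fun z hz => (hfd z (hball hz)).differentiableAt.differentiableWithinAt)
      (fun z hz => by
        rw [fderivWithin_of_isOpen Metric.isOpen_ball hz]
        exact (hfd z (hball hz)).fderiv)
      hy (Metric.mem_ball_self hε)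
  exact fun z hz => han.eqOn_of_preconnected_of_eventuallyEq hconst hUc hz₀ hev hz

/-- Flatness argument in Yu's theorem: if `F` solves the structure equation
`F⁻¹ dF = ((g, -g²),(1, -g)) ω` on a connected open set `U` with `ω` nowhere
zero, and the hyperbolic Gauss map `G = F₁₁'/F₂₁'` is a constant `c`, then
`F₁₁ = c F₂₁ + C₁`, `F₁₂ = c F₂₂ + C₂` for constants `C₁, C₂`, and the
secondary Gauss map `g` is the constant `-C₂/C₁`. -/
theorem stmt_12 (U : Set ℂ) (hU : IsOpen U) (hUc : IsPreconnected U)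
    (hUne : U.Nonempty)
    (F₁₁ F₁₂ F₂₁ F₂₂ g w : ℂ → ℂ) (c : ℂ)
    (hw : ∀ z ∈ U, w z ≠ 0)
    (hdet : ∀ z ∈ U, F₁₁ z * F₂₂ z - F₁₂ z * F₂₁ z = 1)
    (h11 : ∀ z ∈ U, HasDerivAt F₁₁ ((F₁₁ z * g z + F₁₂ z) * w z) z)
    (h12 : ∀ z ∈ U, HasDerivAt F₁₂ (-(g z) * (F₁₁ z * g z + F₁₂ z) * w z) z)
    (h21 : ∀ z ∈ U, HasDerivAt F₂₁ ((F₂₁ z * g z + F₂₂ z) * w z) z)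
    (h22 : ∀ z ∈ U, HasDerivAt F₂₂ (-(g z) * (F₂₁ z * g z + F₂₂ z) * w z) z)
    (hG : ∀ z ∈ U, deriv F₁₁ z = c * deriv F₂₁ z ∧
                    deriv F₁₂ z = c * deriv F₂₂ z) :
    ∃ C₁ C₂ : ℂ, C₁ ≠ 0 ∧
      (∀ z ∈ U, F₁₁ z = c * F₂₁ z + C₁) ∧
      (∀ z ∈ U, F₁₂ z = c * F₂₂ z + C₂) ∧
      (∀ z ∈ U, g z = -C₂ / C₁) := by
  obtain ⟨z₀, hz₀⟩ := hUne
  -- the key pointwise identity: (F₁₁ - c F₂₁) g = c F₂₂ - F₁₂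
  have key : ∀ z ∈ U,
      (F₁₁ z - c * F₂₁ z) * g z = c * F₂₂ z - F₁₂ z := by
    intro z hz
    have e1 : deriv F₁₁ z = (F₁₁ z * g z + F₁₂ z) * w z := (h11 z hz).deriv
    have e2 : deriv F₂₁ z = (F₂₁ z * g z + F₂₂ z) * w z := (h21 z hz).deriv
    have h := (hG z hz).1
    rw [e1, e2] at h
    have h0 : (F₁₁ z * g z + F₁₂ z - c * (F₂₁ z * g z + F₂₂ z)) * w z = 0 := by
      linear_combination h
    rcases mul_eq_zero.mp h0 with h' | h'
    · linear_combination h'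
    · exact absurd h' (hw z hz)
  -- A = F₁₁ - c F₂₁ has zero derivative
  have hA : ∀ z ∈ U, HasDerivAt (fun z => F₁₁ z - c * F₂₁ z) 0 z := by
    intro z hz
    have e1 : deriv F₁₁ z = (F₁₁ z * g z + F₁₂ z) * w z := (h11 z hz).deriv
    have e2 : deriv F₂₁ z = (F₂₁ z * g z + F₂₂ z) * w z := (h21 z hz).deriv
    have h := (hG z hz).1
    rw [e1, e2] at h
    have hd : HasDerivAt (fun z => F₁₁ z - c * F₂₁ z)
        ((F₁₁ z * g z + F₁₂ z) * w z - c * ((F₂₁ z * g z + F₂₂ z) * w z)) z :=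
      (h11 z hz).sub ((h21 z hz).const_mul c)
    have h0 : (F₁₁ z * g z + F₁₂ z) * w z - c * ((F₂₁ z * g z + F₂₂ z) * w z)
        = 0 := by linear_combination h
    exact h0 ▸ hd
  have hB : ∀ z ∈ U, HasDerivAt (fun z => F₁₂ z - c * F₂₂ z) 0 z := by
    intro z hz
    have e1 : deriv F₁₂ z = -(g z) * (F₁₁ z * g z + F₁₂ z) * w z := (h12 z hz).deriv
    have e2 : deriv F₂₂ z = -(g z) * (F₂₁ z * g z + F₂₂ z) * w z := (h22 z hz).deriv
    have h := (hG z hz).2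
    rw [e1, e2] at h
    have hd : HasDerivAt (fun z => F₁₂ z - c * F₂₂ z)
        (-(g z) * (F₁₁ z * g z + F₁₂ z) * w z
          - c * (-(g z) * (F₂₁ z * g z + F₂₂ z) * w z)) z :=
      (h12 z hz).sub ((h22 z hz).const_mul c)
    have h0 : -(g z) * (F₁₁ z * g z + F₁₂ z) * w z
        - c * (-(g z) * (F₂₁ z * g z + F₂₂ z) * w z) = 0 := by linear_combination h
    exact h0 ▸ hd
  have hAc := const_of_hasDerivAt_zero U hU hUc _ hA hz₀
  have hBc := const_of_hasDerivAt_zero U hU hUc _ hB hz₀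
  set C₁ := F₁₁ z₀ - c * F₂₁ z₀ with hC₁
  set C₂ := F₁₂ z₀ - c * F₂₂ z₀ with hC₂
  have hA' : ∀ z ∈ U, F₁₁ z = c * F₂₁ z + C₁ := fun z hz => by
    have := hAc z hz; linear_combination this
  have hB' : ∀ z ∈ U, F₁₂ z = c * F₂₂ z + C₂ := fun z hz => by
    have := hBc z hz; linear_combination this
  have hgC : ∀ z ∈ U, C₁ * g z = -C₂ := fun z hz => by
    linear_combination key z hz - g z * (hA' z hz) - (hB' z hz)
  have hC₁ne : C₁ ≠ 0 := by
    intro h0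
    have hC₂0 : C₂ = 0 := by
      have := hgC z₀ hz₀
      rw [h0] at this
      simpa using this.symm
    have hd := hdet z₀ hz₀
    rw [hA' z₀ hz₀, hB' z₀ hz₀, h0, hC₂0] at hd
    exact zero_ne_one (by linear_combination hd : (0:ℂ) = 1)
  refine ⟨C₁, C₂, hC₁ne, hA', hB', fun z hz => ?_⟩
  have := hgC z hz
  field_simp
  linear_combination this
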